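/- Let x, y ∈ (0,1) be real numbers (viewed as points of 𝔻) such that ln(x/(1−x)) − ln(y/(1−y)) is irrational. Then liminf_{n→∞} |fⁿ(x) − fⁿ(y)| = 0. -/

import Mathlib

/-- The open unit disk in `ℂ`. -/
def unitDisk : Set ℂ := {z : ℂ | ‖z‖ < 1}

/-- The map `f` on the open unit disk. -/
noncomputable def mapF (z : ℂ) : ℂ :=
  if z = 0 then 0 else
    (Real.exp 1 * z / (Real.exp 1 * ‖z‖ - ‖z‖ + 1)) *
      Complex.exp (2 * Real.pi * Complex.I *
        Real.log (‖z‖ / (1 - ‖z‖)))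

/-- The map `F`, the inverse of `f`, on the open unit disk. -/
noncomputable def mapFinv (w : ℂ) : ℂ :=
  if w = 0 then 0 else
    ((Real.exp 1)⁻¹ * w / ((Real.exp 1)⁻¹ * ‖w‖ - ‖w‖ + 1)) *
      Complex.exp (-(2 * Real.pi * Complex.I *
        Real.log (‖w‖ / (1 - ‖w‖))))

open Complex Filter

noncomputable def sig (a : ℝ) : ℝ := Real.exp a / (1 + Real.exp a)

lemma one_add_exp_pos (a : ℝ) : 0 < 1 + Real.exp a := by positivity

lemma sig_pos (a : ℝ) : 0 < sig a := div_pos (Real.exp_pos a) (one_add_exp_pos a)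

lemma sig_lt_one (a : ℝ) : sig a < 1 := by
  rw [sig, div_lt_one (one_add_exp_pos a)]; linarith

lemma sig_ratio (a : ℝ) : sig a / (1 - sig a) = Real.exp a := by
  have h := one_add_exp_pos a
  rw [sig]; field_simp; ring

lemma sig_of_mem (x : ℝ) (hx0 : 0 < x) (hx1 : x < 1) :
    sig (Real.log (x / (1 - x))) = x := by
  have hx1' : (0:ℝ) < 1 - x := by linarith
  have ht : 0 < x / (1 - x) := div_pos hx0 hx1'
  have hb : 0 < 1 + x / (1 - x) := by positivity
  rw [sig, Real.exp_log ht, div_eq_iff hb.ne']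
  field_simp; ring

lemma abs_sig_exp (a θ : ℝ) :
    ‖(sig a : ℂ) * Complex.exp (θ * Complex.I)‖ = sig a := by
  rw [norm_mul, Complex.norm_exp]
  simp [Complex.norm_real, abs_of_pos (sig_pos a)]

lemma mapF_step (a θ : ℝ) :
    mapF ((sig a : ℂ) * Complex.exp (θ * Complex.I)) =
      (sig (a + 1) : ℂ) * Complex.exp (((θ + 2 * Real.pi * a : ℝ) : ℂ) * Complex.I) := by
  set z : ℂ := (sig a : ℂ) * Complex.exp (θ * Complex.I) with hz
  have hzne : z ≠ 0 := by
    apply mul_ne_zero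
    · exact_mod_cast (sig_pos a).ne'
    · exact Complex.exp_ne_zero _
  have habs : ‖z‖ = sig a := abs_sig_exp a θ
  have hlog : Real.log (sig a / (1 - sig a)) = a := by
    rw [sig_ratio, Real.log_exp]
  have hmod : Real.exp 1 * sig a / (Real.exp 1 * sig a - sig a + 1) = sig (a + 1) := by
    simp only [sig, Real.exp_add]
    have h1 := one_add_exp_pos a
    have h2 : (0:ℝ) < Real.exp a * Real.exp 1 + 1 := by positivity
    have h3 : (0:ℝ) < Real.exp 1 * (Real.exp a / (1 + Real.exp a)) -
        Real.exp a / (1 + Real.exp a) + 1 := by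
      have : Real.exp 1 * (Real.exp a / (1 + Real.exp a)) -
          Real.exp a / (1 + Real.exp a) + 1 =
          (Real.exp a * Real.exp 1 + 1) / (1 + Real.exp a) := by field_simp; ring
      rw [this]; positivity
    rw [div_eq_iff h3.ne']
    field_simp
    ring
  rw [mapF, if_neg hzne, habs, hlog]
  have hD : (Real.exp 1 : ℂ) * (sig a : ℂ) - (sig a : ℂ) + 1 =
      ((Real.exp 1 * sig a - sig a + 1 : ℝ) : ℂ) := by push_cast; ring
  have hfactor : (Real.exp 1 : ℂ) * z / ((Real.exp 1 : ℂ) * (sig a : ℂ) - (sig a : ℂ) + 1) =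
      (sig (a + 1) : ℂ) * Complex.exp (θ * Complex.I) := by
    rw [hz, hD, ← hmod]
    push_cast
    ring
  rw [hfactor, mul_assoc, ← Complex.exp_add]
  congr 1
  push_cast
  ring

lemma mapF_iter (a θ : ℝ) (n : ℕ) :
    mapF^[n] ((sig a : ℂ) * Complex.exp (θ * Complex.I)) =
      (sig (a + n) : ℂ) *
        Complex.exp (((θ + 2 * Real.pi * (n * a + n * (n - 1) / 2) : ℝ) : ℂ) * Complex.I) := by
  induction n with
  | zero => norm_num
  | succ n ih =>
    rw [Function.iterate_succ_apply', ih, mapF_step]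
    have h1 : a + (n:ℝ) + 1 = a + ((n:ℕ) + 1 : ℕ) := by push_cast; ring
    have h2 : θ + 2 * Real.pi * ((n:ℝ) * a + n * (n - 1) / 2) + 2 * Real.pi * (a + n) =
        θ + 2 * Real.pi * ((((n:ℕ)+1:ℕ):ℝ) * a + (((n:ℕ)+1:ℕ):ℝ) * ((((n:ℕ)+1:ℕ):ℝ) - 1) / 2) := by
      push_cast; ring
    rw [h1, h2]

lemma step1 (δ : ℝ) (hδ : Irrational δ) {ε : ℝ} (hε : 0 < ε) (hε1 : ε < 1) :
    ∃ m n : ℤ, m ≠ 0 ∧ 0 < m * δ + n ∧ m * δ + n < ε := by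
  rcases (AddSubgroup.closure ({δ, 1} : Set ℝ)).dense_or_cyclic with hd | ⟨g, hg⟩
  · obtain ⟨s, hsS, hs⟩ := hd.exists_mem_open isOpen_Ioo
      (⟨ε / 2, by constructor <;> linarith⟩ : Set.Nonempty (Set.Ioo 0 ε))
    rw [SetLike.mem_coe, AddSubgroup.mem_closure_pair] at hsS
    obtain ⟨m, n, rfl⟩ := hsS
    simp only [zsmul_eq_mul, mul_one] at hs ⊢
    refine ⟨m, n, ?_, hs.1, hs.2⟩
    rintro rfl
    simp only [Int.cast_zero, zero_mul, zero_add] at hs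
    have h1 : (1:ℝ) ≤ n := by exact_mod_cast hs.1
    linarith [hs.2]
  · exfalso
    have hδS : δ ∈ AddSubgroup.closure ({δ, 1} : Set ℝ) :=
      AddSubgroup.subset_closure (Set.mem_insert _ _)
    have h1S : (1:ℝ) ∈ AddSubgroup.closure ({δ, 1} : Set ℝ) :=
      AddSubgroup.subset_closure (Set.mem_insert_of_mem _ rfl)
    rw [hg, AddSubgroup.mem_closure_singleton] at hδS h1S
    obtain ⟨c, hc⟩ := hδS
    obtain ⟨d, hd⟩ := h1S
    have hd0 : d ≠ 0 := by rintro rfl; simp at hd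
    have hg0 : g = 1 / (d:ℝ) := by
      field_simp
      rw [← hd]; simp [zsmul_eq_mul, mul_comm]
    apply hδ
    refine ⟨(c : ℚ) / (d : ℚ), ?_⟩
    rw [← hc, hg0]
    push_cast
    simp [zsmul_eq_mul]
    ring

lemma freq_small (δ : ℝ) (hδ : Irrational δ) {ε : ℝ} (hε : 0 < ε) :
    ∃ᶠ p : ℕ in Filter.atTop, ∃ q : ℤ, |p * δ - q| < ε := by
  rw [Filter.frequently_atTop]
  intro N
  have hε' : 0 < min ε (1/2) := lt_min hε (by norm_num)
  obtain ⟨m, n, hm, h1, h2⟩ := step1 δ hδ hε' (lt_of_le_of_lt (min_le_right _ _) (by norm_num))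
  set η : ℝ := (m:ℝ) * δ + n with hη
  have hη1 : η < 1 := lt_of_lt_of_le h2 (le_trans (min_le_right _ _) (by norm_num))
  have hηε : η < ε := lt_of_lt_of_le h2 (min_le_left _ _)
  set j : ℕ := ⌈((N:ℝ) + 1) / η⌉₊ with hj
  have hx0 : (0:ℝ) ≤ ((N:ℝ) + 1) / η := by positivity
  have hjge : ((N:ℝ) + 1) ≤ (j:ℝ) * η := by
    rw [← div_le_iff₀ h1]; exact Nat.le_ceil _
  have hjlt : (j:ℝ) * η < (N:ℝ) + 1 + η := by
    have h : (j:ℝ) < ((N:ℝ) + 1) / η + 1 := by rw [hj]; exact Nat.ceil_lt_add_one hx0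
    have h' := mul_lt_mul_of_pos_right h h1
    rwa [add_mul, one_mul, div_mul_cancel₀ _ h1.ne'] at h'
  have hjN : (N:ℝ) + 1 ≤ (j:ℝ) := by
    calc ((N:ℝ) + 1) ≤ (j:ℝ) * η := hjge
    _ ≤ (j:ℝ) * 1 := by
        apply mul_le_mul_of_nonneg_left hη1.le (Nat.cast_nonneg j)
    _ = j := mul_one _
  have hjNnat : N ≤ j := by exact_mod_cast le_trans (by linarith : (N:ℝ) ≤ (N:ℝ)+1) hjN
  have hkey : |(j:ℝ) * η - ((N:ℝ) + 1)| < ε :=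
    abs_lt.2 ⟨by linarith, by linarith⟩
  have hmabs : 1 ≤ m.natAbs := Int.natAbs_pos.2 hm
  refine ⟨j * m.natAbs, le_trans hjNnat (Nat.le_mul_of_pos_right j hmabs), ?_⟩
  rcases lt_or_gt_of_ne hm with hneg | hpos
  · -- m < 0 : (m.natAbs : ℝ) = -m
    refine ⟨(j:ℤ) * n - ((N:ℤ) + 1), ?_⟩
    have hcast : ((j * m.natAbs : ℕ) : ℝ) = (j:ℝ) * (-(m:ℝ)) := by
      push_cast [Nat.cast_natAbs]
      rw [abs_of_neg (by exact_mod_cast hneg : (m:ℝ) < 0)]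
    rw [hcast]
    have : (j:ℝ) * (-(m:ℝ)) * δ - ((j:ℤ) * n - ((N:ℤ) + 1) : ℤ) =
        -((j:ℝ) * η - ((N:ℝ) + 1)) := by push_cast [hη]; ring
    rw [this, abs_neg]
    exact hkey
  · refine ⟨((N:ℤ) + 1) - (j:ℤ) * n, ?_⟩
    have hcast : ((j * m.natAbs : ℕ) : ℝ) = (j:ℝ) * (m:ℝ) := by
      push_cast [Nat.cast_natAbs]
      rw [abs_of_pos (by exact_mod_cast hpos : (0:ℝ) < (m:ℝ))]
    rw [hcast]
    have : (j:ℝ) * (m:ℝ) * δ - (((N:ℤ) + 1) - (j:ℤ) * n : ℤ) =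
        (j:ℝ) * η - ((N:ℝ) + 1) := by push_cast [hη]; ring
    rw [this]
    exact hkey

lemma tendsto_sig : Filter.Tendsto sig Filter.atTop (nhds 1) := by
  have heq : sig = fun a => (Real.exp (-a) + 1)⁻¹ := by
    funext a
    rw [sig, Real.exp_neg]
    have := Real.exp_pos a
    field_simp
  rw [heq]
  have h0 : Filter.Tendsto (fun a : ℝ => Real.exp (-a) + 1) Filter.atTop (nhds 1) := by
    have := Real.tendsto_exp_neg_atTop_nhds_zero.add (tendsto_const_nhds (x := (1:ℝ)))
    simpa using this
  have := h0.inv₀ (by norm_num)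
  simpa using this

lemma exp_diff_bound (α β : ℝ) (m : ℤ) (h : |α - β - 2 * Real.pi * m| ≤ 1) :
    ‖Complex.exp ((α:ℂ) * Complex.I) - Complex.exp ((β:ℂ) * Complex.I)‖ ≤
      2 * |α - β - 2 * Real.pi * m| := by
  have h1 : Complex.exp ((α:ℂ) * Complex.I) - Complex.exp ((β:ℂ) * Complex.I) =
      Complex.exp ((β:ℂ) * Complex.I) *
        (Complex.exp (((α - β - 2 * Real.pi * m : ℝ) : ℂ) * Complex.I) - 1) := by
    rw [mul_sub, mul_one, ← Complex.exp_add]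
    congr 1
    have harg : (β:ℂ) * Complex.I + ((α - β - 2 * Real.pi * m : ℝ) : ℂ) * Complex.I =
        (α:ℂ) * Complex.I - (m:ℤ) * (2 * (Real.pi:ℂ) * Complex.I) := by push_cast; ring
    rw [harg, Complex.exp_sub, Complex.exp_int_mul_two_pi_mul_I, div_one]
  rw [h1, norm_mul, Complex.norm_exp]
  have hre : ((β:ℂ) * Complex.I).re = 0 := by simp
  rw [hre, Real.exp_zero, one_mul]
  have habs : ‖((α - β - 2 * Real.pi * m : ℝ) : ℂ) * Complex.I‖ =
      |α - β - 2 * Real.pi * m| := by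
    rw [norm_mul, Complex.norm_I, mul_one, Complex.norm_real, Real.norm_eq_abs]
  calc ‖Complex.exp (((α - β - 2 * Real.pi * m : ℝ) : ℂ) * Complex.I) - 1‖ ≤
      2 * ‖((α - β - 2 * Real.pi * m : ℝ) : ℂ) * Complex.I‖ :=
        Complex.norm_exp_sub_one_le (by rw [habs]; exact h)
    _ = 2 * |α - β - 2 * Real.pi * m| := by rw [habs]

lemma dist_bound (A B α β : ℝ) (hB : |B| ≤ 1) (m : ℤ) (h : |α - β - 2 * Real.pi * m| ≤ 1) :
    ‖(A:ℂ) * Complex.exp ((α:ℂ) * Complex.I) -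
        (B:ℂ) * Complex.exp ((β:ℂ) * Complex.I)‖ ≤
      |A - B| + 2 * |α - β - 2 * Real.pi * m| := by
  have hsplit : (A:ℂ) * Complex.exp ((α:ℂ) * Complex.I) -
      (B:ℂ) * Complex.exp ((β:ℂ) * Complex.I) =
      ((A:ℂ) - B) * Complex.exp ((α:ℂ) * Complex.I) +
        (B:ℂ) * (Complex.exp ((α:ℂ) * Complex.I) - Complex.exp ((β:ℂ) * Complex.I)) := by
    ring
  rw [hsplit]
  calc ‖_‖ ≤ ‖((A:ℂ) - B) * Complex.exp ((α:ℂ) * Complex.I)‖ +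
      ‖(B:ℂ) * (Complex.exp ((α:ℂ) * Complex.I) -
        Complex.exp ((β:ℂ) * Complex.I))‖ := norm_add_le _ _
    _ ≤ |A - B| + 2 * |α - β - 2 * Real.pi * m| := by
        rw [norm_mul, norm_mul]
        have e1 : ‖(A:ℂ) - B‖ = |A - B| := by
          rw [← Complex.ofReal_sub, Complex.norm_real, Real.norm_eq_abs]
        have e2 : ‖Complex.exp ((α:ℂ) * Complex.I)‖ = 1 := by
          rw [Complex.norm_exp]; simp
        have e3 : ‖(B:ℂ)‖ = |B| := by rw [Complex.norm_real, Real.norm_eq_abs]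
        rw [e1, e2, e3, mul_one]
        have := exp_diff_bound α β m h
        nlinarith [abs_nonneg (A - B), norm_nonneg
          (Complex.exp ((α:ℂ) * Complex.I) - Complex.exp ((β:ℂ) * Complex.I)),
          abs_nonneg B]

/-- For `x, y ∈ (0,1)` with `ln(x/(1-x)) - ln(y/(1-y))` irrational, the distances between the
iterates of `f` at `x` and `y` have zero liminf. -/
theorem stmt_16 (x y : ℝ) (hx : x ∈ Set.Ioo (0 : ℝ) 1) (hy : y ∈ Set.Ioo (0 : ℝ) 1)
    (hirr : Irrational (Real.log (x / (1 - x)) - Real.log (y / (1 - y)))) :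
    Filter.liminf (fun n : ℕ => ‖mapF^[n] (x : ℂ) - mapF^[n] (y : ℂ)‖)
      Filter.atTop = 0 := by
  obtain ⟨hx0, hx1⟩ := hx
  obtain ⟨hy0, hy1⟩ := hy
  set a := Real.log (x / (1 - x)) with ha
  set b := Real.log (y / (1 - y)) with hb
  have hxc : (x:ℂ) = (sig a : ℂ) * Complex.exp (((0:ℝ):ℂ) * Complex.I) := by
    rw [ha, sig_of_mem x hx0 hx1]; simp
  have hyc : (y:ℂ) = (sig b : ℂ) * Complex.exp (((0:ℝ):ℂ) * Complex.I) := by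
    rw [hb, sig_of_mem y hy0 hy1]; simp
  set alp : ℕ → ℝ := fun n => 0 + 2 * Real.pi * ((n:ℝ) * a + (n:ℝ) * ((n:ℝ) - 1) / 2) with halp
  set bet : ℕ → ℝ := fun n => 0 + 2 * Real.pi * ((n:ℝ) * b + (n:ℝ) * ((n:ℝ) - 1) / 2) with hbet
  have hfx : ∀ n : ℕ, mapF^[n] (x:ℂ) =
      (sig (a + n) : ℂ) * Complex.exp (((alp n : ℝ) : ℂ) * Complex.I) := by
    intro n; rw [hxc]; exact mapF_iter a 0 n
  have hfy : ∀ n : ℕ, mapF^[n] (y:ℂ) =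
      (sig (b + n) : ℂ) * Complex.exp (((bet n : ℝ) : ℂ) * Complex.I) := by
    intro n; rw [hyc]; exact mapF_iter b 0 n
  set g : ℕ → ℝ := fun n => ‖mapF^[n] (x : ℂ) - mapF^[n] (y : ℂ)‖ with hg
  have hgnn : ∀ n, 0 ≤ g n := fun n => norm_nonneg _
  have hub : Filter.IsBoundedUnder (· ≥ ·) Filter.atTop g :=
    Filter.isBoundedUnder_of ⟨0, fun n => hgnn n⟩
  have hub2 : Filter.IsBoundedUnder (· ≤ ·) Filter.atTop g := by
    refine Filter.isBoundedUnder_of ⟨2, fun n => ?_⟩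
    rw [hg]
    calc ‖mapF^[n] (x : ℂ) - mapF^[n] (y : ℂ)‖ ≤
        ‖mapF^[n] (x : ℂ)‖ + ‖mapF^[n] (y : ℂ)‖ := by
          simpa [Complex.dist_eq] using dist_triangle (mapF^[n] (x:ℂ)) 0 (mapF^[n] (y:ℂ))
      _ ≤ 2 := by
          rw [hfx n, hfy n, abs_sig_exp, abs_sig_exp]
          linarith [sig_lt_one (a + n), sig_lt_one (b + n)]
  have hcb : Filter.IsCoboundedUnder (· ≥ ·) Filter.atTop g := hub2.isCoboundedUnder_ge
  refine le_antisymm ?_ (Filter.le_liminf_of_le hcb (Filter.Eventually.of_forall hgnn))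
  refine le_of_forall_pos_le_add fun ε hε => ?_
  rw [zero_add]
  refine Filter.liminf_le_of_frequently_le ?_ hub
  -- frequently g n ≤ ε
  have hpi := Real.pi_pos
  set ε₁ : ℝ := min (ε / (8 * Real.pi)) (1 / (4 * Real.pi)) with hε₁
  have hε₁pos : 0 < ε₁ := lt_min (by positivity) (by positivity)
  have hfreq := freq_small (a - b) hirr hε₁pos
  have htd : Filter.Tendsto (fun n : ℕ => |sig (a + n) - sig (b + n)|)
      Filter.atTop (nhds 0) := by
    have h1 : Filter.Tendsto (fun n : ℕ => sig (a + n)) Filter.atTop (nhds 1) :=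
      tendsto_sig.comp ((tendsto_atTop_add_const_left _ a tendsto_id).comp
        tendsto_natCast_atTop_atTop)
    have h2 : Filter.Tendsto (fun n : ℕ => sig (b + n)) Filter.atTop (nhds 1) :=
      tendsto_sig.comp ((tendsto_atTop_add_const_left _ b tendsto_id).comp
        tendsto_natCast_atTop_atTop)
    have := (h1.sub h2).abs
    simpa using this
  have hev : ∀ᶠ n : ℕ in Filter.atTop, |sig (a + n) - sig (b + n)| < ε / 2 :=
    htd.eventually_lt_const (by positivity)
  refine (hfreq.and_eventually hev).mono ?_
  rintro n ⟨⟨m, hm⟩, hd⟩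
  have hab : alp n - bet n - 2 * Real.pi * m = 2 * Real.pi * ((n:ℝ) * (a - b) - m) := by
    rw [halp, hbet]; ring
  have habs : |alp n - bet n - 2 * Real.pi * m| = 2 * Real.pi * |(n:ℝ) * (a - b) - m| := by
    rw [hab, abs_mul, abs_of_pos (by positivity : (0:ℝ) < 2 * Real.pi)]
  have hsmall : |alp n - bet n - 2 * Real.pi * m| ≤ 1 := by
    rw [habs]
    have h1 : |(n:ℝ) * (a - b) - m| ≤ 1 / (4 * Real.pi) :=
      le_trans hm.le (min_le_right _ _)
    calc 2 * Real.pi * |(n:ℝ) * (a - b) - m| ≤ 2 * Real.pi * (1 / (4 * Real.pi)) := by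
          exact mul_le_mul_of_nonneg_left h1 (by positivity)
      _ ≤ 1 := by rw [mul_one_div]; rw [div_le_one (by positivity)]; linarith
  have hbound := dist_bound (sig (a + n)) (sig (b + n)) (alp n) (bet n)
    (by rw [abs_of_pos (sig_pos _)]; exact (sig_lt_one _).le) m hsmall
  rw [hg]
  calc ‖mapF^[n] (x : ℂ) - mapF^[n] (y : ℂ)‖ ≤
      |sig (a + n) - sig (b + n)| + 2 * |alp n - bet n - 2 * Real.pi * m| := by
        rw [hfx n, hfy n]; exact hbound
    _ ≤ ε / 2 + 2 * (2 * Real.pi * (ε / (8 * Real.pi))) := by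
        have h1 : |(n:ℝ) * (a - b) - m| ≤ ε / (8 * Real.pi) :=
          le_trans hm.le (min_le_left _ _)
        have h2 : 2 * |alp n - bet n - 2 * Real.pi * m| ≤
            2 * (2 * Real.pi * (ε / (8 * Real.pi))) := by
          rw [habs]
          have := mul_le_mul_of_nonneg_left h1 (by positivity : (0:ℝ) ≤ 2 * Real.pi)
          linarith
        linarith [hd.le]
    _ ≤ ε := by
        have hπ : Real.pi ≠ 0 := hpi.ne'
        have he : 2 * (2 * Real.pi * (ε / (8 * Real.pi))) = ε / 2 := by
          field_simp; ring
        rw [he]; linarith
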